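/- arXiv:1504.03665 — 2 statements merged into one kernel-verified Lean document; each statement's English description precedes it below -/
import Mathlib

section
/- Let x₁,…,x_d ∈ ℝ and let c_k be the k-th elementary symmetric polynomial in x₁,…,x_d. Then (c₁,…,c_d) is a Nuij sequence; in particular, if z^d + Σ_{k=1}^d c_k z^{d-k} is hyperbolic (i.e. c is in the image of the Viète map), then c is a Nuij sequence. Hence H₁^d ⊆ N_d, where H₁^d is the set of coefficient vectors of monic hyperbolic polynomials of degree d. -/
open Polynomial

/-- A real polynomial is hyperbolic if all its complex roots are real. -/
def Hyperbolic (p : Polynomial ℝ) : Prop :=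
  ∀ z : ℂ, Polynomial.aeval z p = 0 → z.im = 0

/-- The perturbed polynomial `p_a(·, s) = p + ∑_{k=1}^d a_k s^k p^{(k)}`. -/
noncomputable def NuijPencil (d : ℕ) (a : ℕ → ℝ) (p : Polynomial ℝ) (s : ℝ) : Polynomial ℝ :=
  p + ∑ k ∈ Finset.Icc 1 d, (a k * s ^ k) • (Polynomial.derivative^[k] p)

/-- `(a₁, …, a_d)` is a Nuij sequence. -/
def IsNuijSeq (d : ℕ) (a : ℕ → ℝ) : Prop :=
  ∀ p : Polynomial ℝ, p.natDegree = d → Hyperbolic p →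
    ∀ s : ℝ, Hyperbolic (NuijPencil d a p s)

lemma exists_fin_enum {α : Type*} {d : ℕ} (M : Multiset α) (h : Multiset.card M = d) :
    ∃ x : Fin d → α, Multiset.map x (Finset.univ : Finset (Fin d)).val = M := by
  have hlen : M.toList.length = d := by rw [Multiset.length_toList, h]
  refine ⟨fun i => M.toList.get (Fin.cast hlen.symm i), ?_⟩
  conv_rhs => rw [← Multiset.coe_toList M]
  rw [Fin.univ_def]
  show Multiset.map _ (↑(List.finRange d) : Multiset (Fin d)) = _
  rw [Multiset.map_coe]
  congr 1
  refine List.ext_get (by simp [hlen]) ?_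
  intro n h1 h2
  simp

lemma multiset_logderiv (z : ℂ) : ∀ (M : Multiset ℂ), (∀ r ∈ M, z - r ≠ 0) →
    eval z (derivative (M.map fun r => X - C r).prod) / eval z ((M.map fun r => X - C r).prod)
      = (M.map fun r => (z - r)⁻¹).sum := by
  refine Multiset.induction ?_ ?_
  · simp
  · intro r M ih h
    have hr : z - r ≠ 0 := h r (Multiset.mem_cons_self r M)
    have hM : ∀ t ∈ M, z - t ≠ 0 := fun t ht => h t (Multiset.mem_cons_of_mem ht)
    have hMne : eval z ((M.map fun r => X - C r).prod) ≠ 0 := by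
      rw [eval_multiset_prod, Multiset.map_map]
      refine Multiset.prod_ne_zero ?_
      intro hmem
      obtain ⟨t, ht, ht'⟩ := Multiset.mem_map.mp hmem
      exact hM t ht (by simpa using ht')
    rw [Multiset.map_cons, Multiset.map_cons, Multiset.prod_cons, derivative_mul,
      Multiset.sum_cons, ← ih hM]
    simp only [derivative_sub, derivative_X, derivative_C, sub_zero, one_mul, eval_add, eval_mul,
      eval_sub, eval_X, eval_C]
    field_simp

lemma im_msum (M : Multiset ℂ) : M.sum.im = (M.map Complex.im).sum :=
  map_multiset_sum Complex.imAddGroupHom M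

lemma hyperbolic_ne_zero {p : Polynomial ℝ} (hp : Hyperbolic p) : p ≠ 0 := by
  intro h
  simpa [h] using hp Complex.I (by simp [h])

lemma hyperbolic_step (c : ℝ) {p : Polynomial ℝ} (hp : Hyperbolic p) :
    Hyperbolic (p + c • derivative p) := by
  intro z hz
  by_cases hpz : (aeval z) p = 0
  · exact hp z hpz
  -- c ≠ 0
  by_cases hc : c = 0
  · exact absurd (by simpa [hc] using hz) hpz
  by_contra hzim
  set P : Polynomial ℂ := p.map (algebraMap ℝ ℂ) with hP
  have hevP : ∀ (w : ℂ) (q : Polynomial ℝ), (aeval w) q = eval w (q.map (algebraMap ℝ ℂ)) := by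
    intro w q; rw [aeval_def, eval_map]
  have hPz : eval z P ≠ 0 := by rw [← hevP]; exact hpz
  have hP0 : P ≠ 0 := fun h => hPz (by simp [h])
  have hsplit : P.Splits := IsAlgClosed.splits P
  have hfac := hsplit.eq_prod_roots
  have hroots : ∀ r ∈ P.roots, r.im = 0 := by
    intro r hr
    exact hp r (by rw [hevP]; exact (mem_roots hP0).mp hr)
  have hzr : ∀ r ∈ P.roots, z - r ≠ 0 := by
    intro r hr h
    exact hPz (by rw [sub_eq_zero] at h; subst h; exact (mem_roots hP0).mp hr)
  -- the equation
  have heq : eval z P + (c : ℂ) * eval z (derivative P) = 0 := by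
    have h1 := hz
    rw [Polynomial.smul_eq_C_mul, map_add, map_mul, aeval_C] at h1
    simp only [hevP] at h1
    rw [← Polynomial.derivative_map] at h1
    exact h1
  have hQz : eval z ((P.roots.map fun r => X - C r).prod) ≠ 0 := by
    intro h
    exact hPz (by rw [hfac, eval_mul, h, mul_zero])
  have hlc : P.leadingCoeff ≠ 0 := leadingCoeff_ne_zero.mpr hP0
  have h1 : eval z (derivative P)
      = P.leadingCoeff * eval z (derivative ((P.roots.map fun r => X - C r).prod)) := by
    conv_lhs => rw [hfac]
    rw [derivative_mul, derivative_C, zero_mul, zero_add, eval_mul, eval_C]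
  have h2 : eval z P = P.leadingCoeff * eval z ((P.roots.map fun r => X - C r).prod) := by
    conv_lhs => rw [hfac]
    rw [eval_mul, eval_C]
  have hratio : eval z (derivative P) / eval z P = (P.roots.map fun r => (z - r)⁻¹).sum := by
    rw [h1, h2, mul_div_mul_left _ _ hlc, multiset_logderiv z P.roots hzr]
  have hsum : ((P.roots.map fun r => (z - r)⁻¹).sum).im = 0 := by
    rw [← hratio]
    have hcz : (c : ℂ) ≠ 0 := Complex.ofReal_ne_zero.mpr hc
    have : eval z (derivative P) / eval z P = -(1 / (c : ℂ)) := by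
      field_simp
      linear_combination heq
    rw [this]
    simp [Complex.div_im]
  -- compute imaginary part of the sum
  have him : ((P.roots.map fun r => (z - r)⁻¹).sum).im
      = (P.roots.map fun r => -z.im / Complex.normSq (z - r)).sum := by
    rw [im_msum, Multiset.map_map]
    refine congrArg _ (Multiset.map_congr rfl ?_)
    intro r hr
    simp only [Function.comp_apply, Complex.inv_im]
    rw [Complex.sub_im, hroots r hr, sub_zero]
  -- roots nonempty
  have hne : P.roots ≠ 0 := by
    intro h0
    have : eval z (derivative P) / eval z P = 0 := by rw [hratio, h0]; simp
    rw [this] at *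
    have hcz : (c : ℂ) ≠ 0 := Complex.ofReal_ne_zero.mpr hc
    have : eval z (derivative P) = 0 := by
      rw [h1, h0]; simp
    rw [this, mul_zero, add_zero] at heq
    exact hPz heq
  -- sum of positives is zero: contradiction
  have hfactor : (P.roots.map fun r => -z.im / Complex.normSq (z - r)).sum
      = -z.im * (P.roots.map fun r => (Complex.normSq (z - r))⁻¹).sum := by
    rw [← Multiset.sum_map_mul_left]
    refine congrArg _ (Multiset.map_congr rfl ?_)
    intro r _
    rw [div_eq_mul_inv]
  have hsz : (P.roots.map fun r => (Complex.normSq (z - r))⁻¹).sum = 0 := by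
    have h0 : -z.im * (P.roots.map fun r => (Complex.normSq (z - r))⁻¹).sum = 0 := by
      rw [← hfactor, ← him, hsum]
    rcases mul_eq_zero.mp h0 with h | h
    · exact absurd (neg_eq_zero.mp h) hzim
    · exact h
  have hpos : 0 < (P.roots.map fun r => (Complex.normSq (z - r))⁻¹).sum := by
    obtain ⟨a, ha⟩ := Multiset.exists_mem_of_ne_zero (by
      simpa using hne : (P.roots.map fun r => (Complex.normSq (z - r))⁻¹) ≠ 0)
    have hc2 : ∀ x ∈ (P.roots.map fun r => (Complex.normSq (z - r))⁻¹), 0 < x := by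
      intro x hx
      obtain ⟨r, hr, rfl⟩ := Multiset.mem_map.mp hx
      exact inv_pos.mpr (Complex.normSq_pos.mpr (sub_ne_zero.mpr (fun h => hzr r hr (by rw [h, sub_self]))))
    calc (0:ℝ) < a := hc2 a ha
    _ ≤ _ := Multiset.single_le_sum (fun x hx => le_of_lt (hc2 x hx)) a ha
  exact absurd hsz (ne_of_gt hpos)

lemma G_hyperbolic {ι : Type*} [DecidableEq ι] (y : ι → ℝ) {p : Polynomial ℝ}
    (hp : Hyperbolic p) (S : Finset ι) :
    Hyperbolic (∑ T ∈ S.powerset, (∏ i ∈ T, y i) • (derivative^[T.card] p)) := by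
  classical
  induction S using Finset.induction_on with
  | empty => simpa using hp
  | insert a S ha ih =>
    rw [Finset.sum_powerset_insert ha]
    have : (∑ T ∈ S.powerset, (∏ i ∈ insert a T, y i) • (derivative^[(insert a T).card] p))
        = y a • derivative (∑ T ∈ S.powerset, (∏ i ∈ T, y i) • (derivative^[T.card] p)) := by
      rw [map_sum, Finset.smul_sum]
      refine Finset.sum_congr rfl ?_
      intro T hT
      have haT : a ∉ T := fun h => ha (Finset.mem_powerset.mp hT h)
      rw [Finset.prod_insert haT, Finset.card_insert_of_notMem haT,
        Function.iterate_succ_apply', derivative_smul, smul_smul]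
    rw [this]
    exact hyperbolic_step _ ih

lemma G_eq (d : ℕ) (x : Fin d → ℝ) (s : ℝ) (p : Polynomial ℝ) :
    ∑ T ∈ (Finset.univ : Finset (Fin d)).powerset,
        (∏ i ∈ T, (x i * s)) • (derivative^[T.card] p)
      = NuijPencil d
          (fun k => ∑ t ∈ Finset.powersetCard k (Finset.univ : Finset (Fin d)), ∏ i ∈ t, x i)
          p s := by
  rw [Finset.sum_powerset]
  have hcard : (Finset.univ : Finset (Fin d)).card = d := by simp
  have hinner : ∀ j : ℕ, (∑ T ∈ Finset.powersetCard j (Finset.univ : Finset (Fin d)),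
        (∏ i ∈ T, (x i * s)) • (derivative^[T.card] p))
      = ((∑ t ∈ Finset.powersetCard j (Finset.univ : Finset (Fin d)), ∏ i ∈ t, x i) * s ^ j)
          • (derivative^[j] p) := by
    intro j
    rw [Finset.sum_mul, Finset.sum_smul]
    refine Finset.sum_congr rfl ?_
    intro T hT
    have hTc : T.card = j := (Finset.mem_powersetCard.mp hT).2
    rw [Finset.prod_mul_distrib, Finset.prod_const, hTc]
  simp only [hinner, hcard]
  have hrange : Finset.range (d + 1) = insert 0 (Finset.Icc 1 d) := by
    ext k; simp; omega
  rw [hrange, Finset.sum_insert (by simp)]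
  have h0 : ((∑ t ∈ Finset.powersetCard 0 (Finset.univ : Finset (Fin d)), ∏ i ∈ t, x i) * s ^ 0)
      • (derivative^[0] p) = p := by
    simp
  rw [h0]
  rfl

lemma part1 (d : ℕ) (x : Fin d → ℝ) :
    IsNuijSeq d (fun k =>
      ∑ t ∈ Finset.powersetCard k (Finset.univ : Finset (Fin d)), ∏ i ∈ t, x i) := by
  intro p _ hp s
  rw [← G_eq]
  exact G_hyperbolic (fun i => x i * s) hp Finset.univ

/-- The elementary symmetric polynomials of any reals `x₁, …, x_d` form a Nuij
sequence, and more generally any coefficient vector of a monic hyperbolic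
polynomial of degree `d` is a Nuij sequence:  `H₁^d ⊆ N_d`. -/
theorem esymm_isNuijSeq (d : ℕ) :
    (∀ x : Fin d → ℝ,
      IsNuijSeq d (fun k =>
        ∑ t ∈ Finset.powersetCard k (Finset.univ : Finset (Fin d)), ∏ i ∈ t, x i)) ∧
    (∀ c : ℕ → ℝ,
      Hyperbolic ((X : Polynomial ℝ) ^ d +
        ∑ k ∈ Finset.Icc 1 d, Polynomial.C (c k) * X ^ (d - k)) →
      IsNuijSeq d c) := by
  constructor
  · exact part1 d
  · intro c hq
    rcases Nat.eq_zero_or_pos d with rfl | hd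
    · intro p _ hp s
      have : NuijPencil 0 c p s = p := by simp [NuijPencil]
      rw [this]; exact hp
    set q : Polynomial ℝ := X ^ d + ∑ k ∈ Finset.Icc 1 d, C (c k) * X ^ (d - k) with hqdef
    have hdeg : (∑ k ∈ Finset.Icc 1 d, C (c k) * X ^ (d - k)).degree < (d : WithBot ℕ) := by
      refine lt_of_le_of_lt (degree_sum_le _ _) ?_
      rw [Finset.sup_lt_iff (by exact_mod_cast WithBot.bot_lt_coe d)]
      intro k hk
      refine lt_of_le_of_lt (degree_C_mul_X_pow_le _ _) ?_
      have hk1 : 1 ≤ k := (Finset.mem_Icc.mp hk).1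
      exact_mod_cast Nat.sub_lt hd hk1
    have hmon : q.Monic := monic_X_pow_add hdeg
    have hq0 : q ≠ 0 := hmon.ne_zero
    have hqdeg : q.degree = (d : WithBot ℕ) := by
      rw [hqdef, degree_add_eq_left_of_degree_lt (by rwa [degree_X_pow]), degree_X_pow]
    have hqnat : q.natDegree = d := natDegree_eq_of_degree_eq_some hqdeg
    set Q : Polynomial ℂ := q.map (algebraMap ℝ ℂ) with hQdef
    have hQmon : Q.Monic := hmon.map _
    have hQ0 : Q ≠ 0 := hQmon.ne_zero
    have hQsplit : Q.Splits := IsAlgClosed.splits Q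
    have hQnat : Q.natDegree = d := by rw [hQdef, q.natDegree_map (algebraMap ℝ ℂ), hqnat]
    have hQcard : Multiset.card Q.roots = d := by
      rw [splits_iff_card_roots.mp hQsplit, hQnat]
    have hev : ∀ (w : ℂ) (r : Polynomial ℝ), (aeval w) r = eval w (r.map (algebraMap ℝ ℂ)) := by
      intro w r; rw [aeval_def, eval_map]
    have hreal : ∀ r ∈ Q.roots, r.im = 0 := by
      intro r hr
      exact hq r (by rw [hev, ← hQdef]; exact (mem_roots hQ0).mp hr)
    set R' : Multiset ℝ := Q.roots.map Complex.re with hR'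
    have hR'card : Multiset.card R' = d := by rw [hR', Multiset.card_map, hQcard]
    have hcoe : R'.map (fun t : ℝ => (t : ℂ)) = Q.roots := by
      rw [hR', Multiset.map_map]
      have : ∀ r ∈ Q.roots, ((r.re : ℂ)) = r := by
        intro r hr
        exact Complex.ext (by simp) (by simp [hreal r hr])
      calc Q.roots.map (fun r => ((r.re : ℂ)))
          = Q.roots.map id := Multiset.map_congr rfl this
        _ = Q.roots := Multiset.map_id _
    have hfac : q = (R'.map fun t => X - C t).prod := by
      apply Polynomial.map_injective (algebraMap ℝ ℂ) (algebraMap ℝ ℂ).injective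
      rw [← hQdef]
      have h1 := hQsplit.eq_prod_roots_of_monic hQmon
      rw [h1, Polynomial.map_multiset_prod, Multiset.map_map, ← hcoe, Multiset.map_map]
      refine congrArg _ (Multiset.map_congr rfl ?_)
      intro t _
      simp [Polynomial.map_sub]
    have hcoeff : ∀ k ∈ Finset.Icc 1 d, c k = (R'.map (fun t => -t)).esymm k := by
      intro k hk
      obtain ⟨hk1, hkd⟩ := Finset.mem_Icc.mp hk
      have hway1 : q.coeff (d - k) = c k := by
        rw [hqdef, coeff_add, coeff_X_pow, if_neg (by omega), zero_add, finset_sum_coeff]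
        have : ∀ j ∈ Finset.Icc 1 d, (C (c j) * X ^ (d - j)).coeff (d - k)
            = if j = k then c j else 0 := by
          intro j hj
          obtain ⟨hj1, hjd⟩ := Finset.mem_Icc.mp hj
          rw [coeff_C_mul, coeff_X_pow]
          by_cases h : j = k
          · rw [if_pos (by omega), if_pos h, mul_one]
          · rw [if_neg (by omega), mul_zero, if_neg h]
        rw [Finset.sum_congr rfl this, Finset.sum_ite_eq' _ k, if_pos hk]
      have hway2 : q.coeff (d - k) = (-1 : ℝ) ^ k * R'.esymm k := by
        rw [hfac, Multiset.prod_X_sub_C_coeff R' (by rw [hR'card]; omega), hR'card]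
        congr 2 <;> omega
      rw [Multiset.esymm_neg, ← hway2, hway1]
    obtain ⟨x, hx⟩ := exists_fin_enum (R'.map (fun t => -t))
      (by rw [Multiset.card_map, hR'card])
    have hesymm : ∀ k ∈ Finset.Icc 1 d,
        (∑ t ∈ Finset.powersetCard k (Finset.univ : Finset (Fin d)), ∏ i ∈ t, x i) = c k := by
      intro k hk
      rw [hcoeff k hk, ← hx, Finset.esymm_map_val]
    intro p hpd hp s
    have hpen : NuijPencil d c p s = NuijPencil d (fun k =>
        ∑ t ∈ Finset.powersetCard k (Finset.univ : Finset (Fin d)), ∏ i ∈ t, x i) p s := by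
      unfold NuijPencil
      congr 1
      refine Finset.sum_congr rfl ?_
      intro k hk
      simp only [hesymm k hk]
    rw [hpen]
    exact part1 d x p hpd hp s
end

section
/- Every sequence of the form a_i = (1/i!)·(α-β)^{i-1}(α+(i-1)β), i = 1,…,d, for real α, β, is a Nuij sequence admitting a universal determinantal representation with associated matrix T_{α,β}. -/
open Polynomial
open scoped Matrix

section Helpers

lemma det_diag_updateRow {d : ℕ} (μ : Fin d → ℝ) (j : Fin d) (c : ℝ) :
    ((Matrix.diagonal μ).updateRow j (fun _ => c)).det
      = c * ∏ i ∈ Finset.univ.erase j, μ i := by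
  rw [Matrix.det_apply']
  rw [Finset.sum_eq_single (1 : Equiv.Perm (Fin d))]
  · simp only [Equiv.Perm.sign_one, Units.val_one, Int.cast_one, one_mul, Equiv.Perm.one_apply]
    rw [← Finset.mul_prod_erase _ _ (Finset.mem_univ j)]
    congr 1
    · simp [Matrix.updateRow_apply]
    · refine Finset.prod_congr rfl fun i hi => ?_
      rw [Finset.mem_erase] at hi
      simp [Matrix.updateRow_apply, hi.1, Matrix.diagonal_apply_eq]
  · intro σ _ hσ
    have hex : ∃ i, σ i ≠ i ∧ σ i ≠ j := by
      by_contra hc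
      push_neg at hc
      have hj : σ j = j := by
        by_cases h : σ j = j
        · exact h
        · exact hc j h
      obtain ⟨i₀, hi₀⟩ : ∃ i, σ i ≠ i := by
        by_contra hid
        push_neg at hid
        exact hσ (Equiv.ext fun i => hid i)
      have h1 : σ i₀ = j := hc i₀ hi₀
      have h2 : i₀ = j := σ.injective (h1.trans hj.symm)
      rw [h2] at hi₀
      exact hi₀ hj
    obtain ⟨i, hi1, hi2⟩ := hex
    have hz : ((Matrix.diagonal μ).updateRow j (fun _ => c)) (σ i) i = 0 := by
      rw [Matrix.updateRow_apply, if_neg hi2, Matrix.diagonal_apply_ne _ hi1]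
    exact mul_eq_zero_of_right _
      (Finset.prod_eq_zero (Finset.mem_univ i) hz)
  · intro h; exact absurd (Finset.mem_univ _) h

lemma det_diag_add_const {d : ℕ} (μ : Fin d → ℝ) (c : ℝ) :
    (Matrix.diagonal μ + Matrix.of (fun _ _ : Fin d => c)).det
      = ∏ i, μ i + c * ∑ j, ∏ i ∈ Finset.univ.erase j, μ i := by
  classical
  set u : Fin d → Fin d → ℝ := fun i => Matrix.diagonal μ i with hu
  set v : Fin d → Fin d → ℝ := fun _ _ => c with hv
  have hM : (Matrix.diagonal μ + Matrix.of (fun _ _ : Fin d => c)) = u + v := by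
    ext i j; simp [u, v, Matrix.add_apply]
  have hdet : (Matrix.diagonal μ + Matrix.of (fun _ _ : Fin d => c)).det
      = Matrix.detRowAlternating (u + v) := by rw [hM]; rfl
  rw [hdet, ← AlternatingMap.coe_multilinearMap, MultilinearMap.map_add_univ]
  simp only [AlternatingMap.coe_multilinearMap]
  set f : Finset (Fin d) → ℝ := fun s => Matrix.detRowAlternating (s.piecewise u v) with hf
  set A : Finset (Finset (Fin d)) :=
    insert Finset.univ ((Finset.univ : Finset (Fin d)).image fun j => Finset.univ.erase j) with hA
  have hvanish : ∀ s ∈ Finset.univ, s ∉ A → f s = 0 := by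
    intro s _ hs
    simp only [hA, Finset.mem_insert, Finset.mem_image, Finset.mem_univ, true_and] at hs
    push_neg at hs
    obtain ⟨hs1, hs2⟩ := hs
    obtain ⟨i₁, hi₁⟩ : ∃ i, i ∉ s := by
      by_contra h; push_neg at h
      exact hs1 (Finset.eq_univ_iff_forall.2 h)
    have hsub : s ⊆ Finset.univ.erase i₁ := fun x hx =>
      Finset.mem_erase.2 ⟨fun h => hi₁ (h ▸ hx), Finset.mem_univ x⟩
    have hss : s ⊂ Finset.univ.erase i₁ := lt_of_le_of_ne hsub (fun h => hs2 i₁ h.symm)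
    obtain ⟨i₂, hi₂m, hi₂⟩ := Finset.exists_of_ssubset hss
    have hne : i₂ ≠ i₁ := (Finset.mem_erase.1 hi₂m).1
    refine (Matrix.detRowAlternating (R := ℝ) (n := Fin d)).map_eq_zero_of_eq _ ?_ hne
    rw [Finset.piecewise_eq_of_notMem _ _ _ hi₂, Finset.piecewise_eq_of_notMem _ _ _ hi₁]
  rw [← Finset.sum_subset (Finset.subset_univ A) hvanish]
  have hinj : ∀ j ∈ (Finset.univ : Finset (Fin d)), ∀ j' ∈ Finset.univ,
      Finset.univ.erase j = Finset.univ.erase j' → j = j' := by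
    intro j _ j' _ h
    by_contra hne
    have : j ∈ Finset.univ.erase j' := Finset.mem_erase.2 ⟨hne, Finset.mem_univ j⟩
    rw [← h] at this
    exact (Finset.mem_erase.1 this).1 rfl
  have huniv_not : Finset.univ ∉ (Finset.univ : Finset (Fin d)).image fun j => Finset.univ.erase j := by
    simp only [Finset.mem_image, Finset.mem_univ, true_and]
    rintro ⟨j, hj⟩
    have hmem : j ∈ (Finset.univ : Finset (Fin d)) := Finset.mem_univ j
    rw [← hj] at hmem
    exact (Finset.mem_erase.1 hmem).1 rfl
  rw [hA, Finset.sum_insert huniv_not, Finset.sum_image hinj]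
  congr 1
  · simp only [hf, Finset.piecewise_univ]
    have : Matrix.detRowAlternating u = (Matrix.diagonal μ).det := rfl
    rw [this, Matrix.det_diagonal]
  · rw [Finset.mul_sum]
    refine Finset.sum_congr rfl fun j _ => ?_
    have hpw : (Finset.univ.erase j).piecewise u v
        = (Matrix.diagonal μ).updateRow j (fun _ => c) := by
      funext i k
      by_cases h : i = j
      · subst h
        rw [Finset.piecewise_eq_of_notMem _ _ _ (fun hh => (Finset.mem_erase.1 hh).1 rfl)]
        simp [v, Matrix.updateRow_apply]
      · rw [Finset.piecewise_eq_of_mem _ _ _ (Finset.mem_erase.2 ⟨h, Finset.mem_univ i⟩)]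
        simp [u, Matrix.updateRow_apply, h]
    show Matrix.detRowAlternating ((Finset.univ.erase j).piecewise u v) = _
    rw [hpw]
    exact det_diag_updateRow μ j c

lemma nuij_eval (d : ℕ) (α β : ℝ) (p : Polynomial ℝ) (hp : p.natDegree ≤ d) (s z : ℝ) :
    Polynomial.eval z (NuijPencil d
        (fun k => (1 / (Nat.factorial k : ℝ)) * (α - β) ^ (k - 1) * (α + ((k : ℝ) - 1) * β)) p s)
      = Polynomial.eval (z + s * (α - β)) p
        + (s * β) * Polynomial.eval (z + s * (α - β)) (Polynomial.derivative p) := by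
  set t : ℝ := s * (α - β) with ht
  set c : ℝ := s * β with hc
  have hterm : ∀ k ∈ Finset.Icc 1 d,
      ((1 / (Nat.factorial k : ℝ)) * (α - β) ^ (k - 1) * (α + ((k : ℝ) - 1) * β) * s ^ k)
          * Polynomial.eval z (Polynomial.derivative^[k] p)
        = (t ^ k + c * k * t ^ (k - 1)) * Polynomial.eval z (Polynomial.hasseDeriv k p) := by
    intro k hk
    obtain ⟨m, rfl⟩ : ∃ m, k = m + 1 := by
      rcases Nat.exists_eq_add_of_le (Finset.mem_Icc.1 hk).1 with ⟨m, hm⟩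
      exact ⟨m, by omega⟩
    have hder : Polynomial.derivative^[m + 1] p
        = (Nat.factorial (m + 1)) • Polynomial.hasseDeriv (m + 1) p := by
      have h0 := congrFun (Polynomial.factorial_smul_hasseDeriv (R := ℝ) (k := m + 1)) p
      rw [← h0, LinearMap.smul_apply]
    rw [hder]
    simp only [Nat.add_sub_cancel, Polynomial.eval_smul, nsmul_eq_mul, smul_eq_mul,
      Polynomial.eval_mul, Polynomial.eval_natCast]
    have hfac : ((Nat.factorial (m + 1) : ℝ)) ≠ 0 := by
      exact_mod_cast Nat.factorial_ne_zero (m + 1)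
    rw [ht, hc]
    push_cast
    field_simp
    rw [mul_pow, mul_pow, pow_succ]
    ring
  have hA : Polynomial.eval (z + t) p
      = ∑ k ∈ Finset.range (d + 1), Polynomial.eval z (Polynomial.hasseDeriv k p) * t ^ k := by
    rw [show z + t = t + z by ring, ← Polynomial.taylor_eval]
    rw [Polynomial.eval_eq_sum_range' (n := d + 1)
      (by rw [Polynomial.natDegree_taylor]; omega) t]
    exact Finset.sum_congr rfl fun k _ => by rw [Polynomial.taylor_coeff]
  have hDp : (Polynomial.derivative p).natDegree < d + 1 := by
    have := Polynomial.natDegree_derivative_le p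
    omega
  have hB : Polynomial.eval (z + t) (Polynomial.derivative p)
      = ∑ k ∈ Finset.range (d + 1),
          ((k : ℝ) + 1) * Polynomial.eval z (Polynomial.hasseDeriv (k + 1) p) * t ^ k := by
    rw [show z + t = t + z by ring, ← Polynomial.taylor_eval]
    rw [Polynomial.eval_eq_sum_range' (n := d + 1)
      (by rw [Polynomial.natDegree_taylor]; exact hDp) t]
    refine Finset.sum_congr rfl fun k _ => ?_
    rw [Polynomial.taylor_coeff]
    have hcomp := congrFun (congrArg (fun f => (DFunLike.coe f))
      (Polynomial.hasseDeriv_comp (R := ℝ) k 1)) p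
    simp only [LinearMap.comp_apply, LinearMap.smul_apply, Polynomial.hasseDeriv_one'] at hcomp
    rw [hcomp, Nat.choose_succ_self_right]
    simp [nsmul_eq_mul]
  simp only [NuijPencil, Polynomial.eval_add, Polynomial.eval_finset_sum, Polynomial.eval_smul,
    smul_eq_mul]
  rw [Finset.sum_congr rfl hterm, hA, hB]
  have hsplit : Finset.range (d + 1) = insert 0 (Finset.Icc 1 d) := by
    ext x; simp [Finset.mem_range, Finset.mem_Icc]; omega
  have hzero : Polynomial.eval z (Polynomial.hasseDeriv 0 p) = Polynomial.eval z p := by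
    simp [Polynomial.hasseDeriv_zero]
  have h1 : ∑ k ∈ Finset.range (d + 1), Polynomial.eval z (Polynomial.hasseDeriv k p) * t ^ k
      = Polynomial.eval z p
        + ∑ k ∈ Finset.Icc 1 d, Polynomial.eval z (Polynomial.hasseDeriv k p) * t ^ k := by
    rw [hsplit, Finset.sum_insert (by simp)]
    simp [hzero]
  have hvanish : Polynomial.eval z (Polynomial.hasseDeriv (d + 1) p) = 0 := by
    rw [Polynomial.hasseDeriv_eq_zero_of_lt_natDegree p (d + 1) (by omega)]
    simp
  have h2 : ∑ k ∈ Finset.range (d + 1),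
        ((k : ℝ) + 1) * Polynomial.eval z (Polynomial.hasseDeriv (k + 1) p) * t ^ k
      = ∑ k ∈ Finset.Icc 1 d,
          (k : ℝ) * Polynomial.eval z (Polynomial.hasseDeriv k p) * t ^ (k - 1) := by
    rw [Finset.sum_range_succ, hvanish]
    rw [show Finset.Icc 1 d = Finset.Ico 1 (d + 1) by rfl, Finset.sum_Ico_eq_sum_range]
    simp only [Nat.add_sub_cancel, mul_zero, zero_mul, add_zero]
    refine Finset.sum_congr rfl fun i _ => ?_
    have : 1 + i = i + 1 := by omega
    rw [this]
    simp [Nat.add_sub_cancel]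
  rw [h1, h2, Finset.mul_sum, add_assoc, ← Finset.sum_add_distrib]
  congr 1
  refine Finset.sum_congr rfl fun k _ => ?_
  ring

lemma polyDerivFinsetProd {ι : Type*} [DecidableEq ι] (s : Finset ι) (f : ι → Polynomial ℝ) :
    Polynomial.derivative (∏ i ∈ s, f i)
      = ∑ j ∈ s, (∏ i ∈ s.erase j, f i) * Polynomial.derivative (f j) := by
  induction s using Finset.induction_on with
  | empty => simp
  | @insert a s ha ih =>
    rw [Finset.prod_insert ha, Polynomial.derivative_mul, ih, Finset.sum_insert ha,
      Finset.erase_insert ha, Finset.mul_sum]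
    congr 1
    · ring
    · refine Finset.sum_congr rfl fun j hj => ?_
      have hja : j ≠ a := fun h => ha (h ▸ hj)
      rw [Finset.erase_insert_of_ne hja.symm,
        Finset.prod_insert (fun h => ha (Finset.mem_of_mem_erase h))]
      ring

lemma det_identity (d : ℕ) (α β : ℝ) (lam : Fin d → ℝ) (z s : ℝ) :
    Matrix.det (z • (1 : Matrix (Fin d) (Fin d) ℝ) + Matrix.diagonal lam
        + s • Matrix.of (fun i j : Fin d => if i = j then α else β))
      = Polynomial.eval z
          (NuijPencil d
            (fun k => (1 / (Nat.factorial k : ℝ)) * (α - β) ^ (k - 1) * (α + ((k : ℝ) - 1) * β))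
            (∏ i, (X + Polynomial.C (lam i))) s) := by
  classical
  set p : Polynomial ℝ := ∏ i, (X + Polynomial.C (lam i)) with hpdef
  have hdeg : p.natDegree ≤ d := by
    rw [hpdef, Polynomial.natDegree_prod_of_monic _ _ (fun i _ => Polynomial.monic_X_add_C _)]
    simp
  rw [nuij_eval d α β p hdeg s z]
  set t : ℝ := s * (α - β) with ht
  set c : ℝ := s * β with hc
  set μ : Fin d → ℝ := fun i => z + lam i + t with hμ
  have hM : z • (1 : Matrix (Fin d) (Fin d) ℝ) + Matrix.diagonal lam
      + s • Matrix.of (fun i j : Fin d => if i = j then α else β)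
      = Matrix.diagonal μ + Matrix.of (fun _ _ : Fin d => c) := by
    ext i j
    by_cases h : i = j
    · subst h
      simp [Matrix.add_apply, Matrix.smul_apply, Matrix.one_apply_eq, Matrix.diagonal_apply_eq,
        hμ, ht, hc]
      ring
    · simp [Matrix.add_apply, Matrix.smul_apply, Matrix.one_apply_ne h,
        Matrix.diagonal_apply_ne _ h, h, hc]
  rw [hM, det_diag_add_const]
  have he1 : Polynomial.eval (z + t) p = ∏ i, μ i := by
    rw [hpdef, Polynomial.eval_prod]
    exact Finset.prod_congr rfl fun i _ => by simp [hμ]; ring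
  have he2 : Polynomial.eval (z + t) (Polynomial.derivative p)
      = ∑ j, ∏ i ∈ Finset.univ.erase j, μ i := by
    rw [hpdef, polyDerivFinsetProd]
    rw [Polynomial.eval_finset_sum]
    refine Finset.sum_congr rfl fun j _ => ?_
    simp only [Polynomial.derivative_add, Polynomial.derivative_X, Polynomial.derivative_C,
      add_zero, mul_one, Polynomial.eval_mul, Polynomial.eval_prod, Polynomial.eval_one]
    exact Finset.prod_congr rfl fun i _ => by simp [hμ]; ring
  rw [he1, he2]

lemma eval_charpoly_det {R : Type*} [CommRing R] {d : ℕ} (M : Matrix (Fin d) (Fin d) R) (z : R) :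
    Polynomial.eval z M.charpoly = (z • (1 : Matrix (Fin d) (Fin d) R) - M).det := by
  rw [Matrix.charpoly, ← Polynomial.coe_evalRingHom, RingHom.map_det]
  congr 1
  ext i j
  by_cases h : i = j
  · subst h
    simp [Matrix.charmatrix_apply_eq, Matrix.sub_apply, Matrix.smul_apply, Matrix.one_apply_eq]
  · simp [Matrix.charmatrix_apply_ne _ _ _ h, Matrix.sub_apply, Matrix.smul_apply,
      Matrix.one_apply_ne h]

lemma eig_real {d : ℕ} (A : Matrix (Fin d) (Fin d) ℝ) (hA : Aᵀ = A) (z : ℂ) (v : Fin d → ℂ)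
    (hv : v ≠ 0) (h : (A.map (algebraMap ℝ ℂ)) *ᵥ v = z • v) : z.im = 0 := by
  classical
  set Ac := A.map (algebraMap ℝ ℂ) with hAc
  set w : Fin d → ℂ := star v with hw
  set n : ℂ := w ⬝ᵥ v with hn
  have hnval : n = ((∑ i, Complex.normSq (v i) : ℝ) : ℂ) := by
    rw [hn, dotProduct]
    push_cast
    refine Finset.sum_congr rfl fun i _ => ?_
    rw [hw]
    simp [Pi.star_apply, Complex.normSq_eq_conj_mul_self]
  have hnne : n ≠ 0 := by
    rw [hnval]
    norm_cast
    have hvi : ∃ i, v i ≠ 0 := by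
      by_contra hc; push_neg at hc
      exact hv (funext hc)
    obtain ⟨i, hi⟩ := hvi
    have hpos : 0 < ∑ i, Complex.normSq (v i) := by
      refine Finset.sum_pos' (fun j _ => Complex.normSq_nonneg _) ⟨i, Finset.mem_univ i, ?_⟩
      exact Complex.normSq_pos.2 hi
    exact ne_of_gt hpos
  have q1 : w ⬝ᵥ (Ac *ᵥ v) = z * n := by
    rw [h, dotProduct_smul, hn, smul_eq_mul]
  have hstar : Ac *ᵥ w = star (Ac *ᵥ v) := by
    funext j
    simp only [Matrix.mulVec, dotProduct, Pi.star_apply, star_sum]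
    refine Finset.sum_congr rfl fun k _ => ?_
    rw [hw]
    simp only [Pi.star_apply, star_mul', hAc, Matrix.map_apply]
    simp [Complex.coe_algebraMap, Complex.conj_ofReal]
  have q2 : w ⬝ᵥ (Ac *ᵥ v) = (starRingEnd ℂ) z * n := by
    rw [Matrix.dotProduct_mulVec, ← Matrix.mulVec_transpose]
    have hAt : Acᵀ = Ac := by rw [hAc, ← Matrix.transpose_map, hA]
    rw [hAt, hstar, h]
    have : star (z • v) = (starRingEnd ℂ) z • w := by
      rw [hw, star_smul]
      rfl
    rw [this, smul_dotProduct, hn, smul_eq_mul]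
  have : z = (starRingEnd ℂ) z := mul_right_cancel₀ hnne (q1.symm.trans q2)
  exact Complex.conj_eq_iff_im.1 this.symm

lemma hyperbolic_factor {d : ℕ} {p : Polynomial ℝ} (hdeg : p.natDegree = d)
    (hhyp : Hyperbolic p) (hp : p ≠ 0) :
    ∃ lam : Fin d → ℝ, p = Polynomial.C p.leadingCoeff * ∏ i, (X + Polynomial.C (lam i)) := by
  classical
  set f : ℝ →+* ℂ := algebraMap ℝ ℂ with hf
  have hfinj : Function.Injective f := f.injective
  set pC : Polynomial ℂ := p.map f with hpC
  have hpCne : pC ≠ 0 := by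
    intro h
    exact hp (Polynomial.map_eq_zero_iff hfinj |>.1 h)
  have hsplits : pC.Splits :=
    IsAlgClosed.splits pC
  have hfact : pC = Polynomial.C pC.leadingCoeff
      * (pC.roots.map fun a => X - Polynomial.C a).prod :=
    hsplits.eq_prod_roots
  have hroots_real : ∀ z ∈ pC.roots, z.im = 0 := by
    intro z hz
    have : Polynomial.eval z pC = 0 := (Polynomial.mem_roots hpCne).1 hz
    apply hhyp z
    rwa [Polynomial.aeval_def, ← Polynomial.eval_map]
  have hcard : Multiset.card pC.roots = d := by
    rw [← hdeg, ← Polynomial.natDegree_map_eq_of_injective hfinj p]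
    exact (Polynomial.splits_iff_card_roots.1 hsplits)
  set R : Multiset ℝ := pC.roots.map Complex.re with hR
  have hRcard : Multiset.card R = d := by rw [hR, Multiset.card_map, hcard]
  have hmain : p = Polynomial.C p.leadingCoeff * (R.map fun r => X - Polynomial.C r).prod := by
    apply Polynomial.map_injective f hfinj
    rw [Polynomial.map_mul, Polynomial.map_C, Polynomial.map_multiset_prod]
    rw [← hpC, hfact]
    congr 1
    · rw [Polynomial.leadingCoeff_map_of_injective hfinj]
    · rw [hR, Multiset.map_map, Multiset.map_map]
      congr 1
      refine Multiset.map_congr rfl fun z hz => ?_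
      simp only [Function.comp_apply, Polynomial.map_sub, Polynomial.map_X, Polynomial.map_C]
      congr 1
      have : (f z.re : ℂ) = z := by
        rw [hf]
        apply Complex.ext
        · simp
        · simp [hroots_real z hz]
      rw [this]
  set l : List ℝ := R.toList with hl
  have hlen : l.length = d := by rw [hl, Multiset.length_toList, hRcard]
  refine ⟨fun i => - l.get (Fin.cast hlen.symm i), ?_⟩
  conv_lhs => rw [hmain]
  congr 1
  have hRl : R = ↑l := (Multiset.coe_toList R).symm
  calc ((R.map fun r => X - Polynomial.C r).prod : Polynomial ℝ)
      = (l.map fun r => X - Polynomial.C r).prod := by rw [hRl]; rfl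
    _ = ∏ i : Fin l.length, (X - Polynomial.C (l.get i)) := (Fin.prod_univ_fun_getElem _ _).symm
    _ = ∏ i : Fin d, (X - Polynomial.C (l.get (Fin.cast hlen.symm i))) :=
        (Fin.prod_congr' (fun j => X - Polynomial.C (l.get j)) hlen.symm).symm
    _ = ∏ i : Fin d, (X + Polynomial.C (- l.get (Fin.cast hlen.symm i))) := by
        refine Finset.prod_congr rfl fun i _ => ?_
        rw [Polynomial.C_neg, sub_eq_add_neg]

lemma pencil_linear (d : ℕ) (a : ℕ → ℝ) (c : ℝ) (q : Polynomial ℝ) (s : ℝ) :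
    NuijPencil d a (Polynomial.C c * q) s = Polynomial.C c * NuijPencil d a q s := by
  have hiter : ∀ k : ℕ, Polynomial.derivative^[k] (Polynomial.C c * q)
      = Polynomial.C c * Polynomial.derivative^[k] q := by
    intro k
    induction k with
    | zero => rfl
    | succ k ih =>
      rw [Function.iterate_succ_apply', ih, Function.iterate_succ_apply',
        Polynomial.derivative_C_mul]
  simp only [NuijPencil, mul_add, Finset.mul_sum]
  congr 1
  refine Finset.sum_congr rfl fun k _ => ?_
  rw [hiter k, Polynomial.smul_eq_C_mul, Polynomial.smul_eq_C_mul]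
  ring

lemma pencil_hyperbolic (d : ℕ) (α β s : ℝ) (lam : Fin d → ℝ) :
    Hyperbolic (NuijPencil d
      (fun k => (1 / (Nat.factorial k : ℝ)) * (α - β) ^ (k - 1) * (α + ((k : ℝ) - 1) * β))
      (∏ i, (X + Polynomial.C (lam i))) s) := by
  classical
  set T : Matrix (Fin d) (Fin d) ℝ := Matrix.of (fun i j : Fin d => if i = j then α else β)
    with hT
  set B : Matrix (Fin d) (Fin d) ℝ := Matrix.diagonal lam + s • T with hB
  have hBsym : Bᵀ = B := by
    rw [hB, Matrix.transpose_add, Matrix.diagonal_transpose, Matrix.transpose_smul]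
    congr 1
    congr 1
    ext i j
    by_cases h : i = j
    · subst h; rfl
    · simp [hT, Matrix.transpose_apply, h, Ne.symm h]
  set Q : Polynomial ℝ := NuijPencil d
      (fun k => (1 / (Nat.factorial k : ℝ)) * (α - β) ^ (k - 1) * (α + ((k : ℝ) - 1) * β))
      (∏ i, (X + Polynomial.C (lam i))) s with hQ
  have hQchar : Q = (-B).charpoly := by
    apply Polynomial.funext
    intro z
    rw [eval_charpoly_det, sub_neg_eq_add, hQ, ← det_identity d α β lam z s, hB, add_assoc]
  intro z hz
  rw [hQchar] at hz
  have hev : Polynomial.eval z (((-B).map (algebraMap ℝ ℂ)).charpoly) = 0 := by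
    rw [Matrix.charpoly_map]
    rw [Polynomial.aeval_def, ← Polynomial.eval_map] at hz
    exact hz
  rw [eval_charpoly_det] at hev
  have hmapneg : ((-B).map (algebraMap ℝ ℂ)) = -(B.map (algebraMap ℝ ℂ)) := by
    ext i j
    simp [Matrix.map_apply]
  rw [hmapneg, sub_neg_eq_add] at hev
  obtain ⟨v, hv, hmv⟩ := (Matrix.exists_mulVec_eq_zero_iff).2 hev
  have heig : (B.map (algebraMap ℝ ℂ)) *ᵥ v = (-z) • v := by
    rw [Matrix.add_mulVec, Matrix.smul_mulVec, Matrix.one_mulVec] at hmv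
    have := eq_neg_of_add_eq_zero_right hmv
    rw [this]
    ext i
    simp
  have := eig_real B hBsym (-z) v hv heig
  simpa using this

end Helpers

/-- Every sequence `a_k = (1/k!)(α-β)^{k-1}(α+(k-1)β)` is a Nuij sequence which
admits a universal determinantal representation with matrix `T_{α,β}`. -/
theorem toeplitz_seq_isNuij_univDetRep (d : ℕ) (α β : ℝ) :
    IsNuijSeq d
      (fun k => (1 / (Nat.factorial k : ℝ)) * (α - β) ^ (k - 1) * (α + ((k : ℝ) - 1) * β)) ∧
    ∀ (lam : Fin d → ℝ) (z s : ℝ),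
      Matrix.det (z • (1 : Matrix (Fin d) (Fin d) ℝ) + Matrix.diagonal lam
          + s • Matrix.of (fun i j : Fin d => if i = j then α else β))
        = Polynomial.eval z
            (NuijPencil d
              (fun k => (1 / (Nat.factorial k : ℝ)) * (α - β) ^ (k - 1) * (α + ((k : ℝ) - 1) * β))
              (∏ i, (X + Polynomial.C (lam i))) s) := by
  constructor
  · intro p hpdeg hhyp s
    rcases Nat.eq_zero_or_pos d with hd | hd
    · subst hd
      have he : NuijPencil 0
          (fun k => (1 / (Nat.factorial k : ℝ)) * (α - β) ^ (k - 1) * (α + ((k : ℝ) - 1) * β)) p s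
          = p := by
        rw [NuijPencil, Finset.Icc_eq_empty (by omega), Finset.sum_empty, add_zero]
      rw [he]
      exact hhyp
    · have hp : p ≠ 0 := by
        intro h
        rw [h, Polynomial.natDegree_zero] at hpdeg
        omega
      obtain ⟨lam, hfac⟩ := hyperbolic_factor hpdeg hhyp hp
      rw [hfac, pencil_linear]
      intro z hz
      rw [map_mul, Polynomial.aeval_C] at hz
      have hlc : (algebraMap ℝ ℂ) p.leadingCoeff ≠ 0 := by
        simp [Polynomial.leadingCoeff_ne_zero.2 hp]
      have hz' : Polynomial.aeval z (NuijPencil d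
          (fun k => (1 / (Nat.factorial k : ℝ)) * (α - β) ^ (k - 1) * (α + ((k : ℝ) - 1) * β))
          (∏ i, (X + Polynomial.C (lam i))) s) = 0 := by
        rcases mul_eq_zero.1 hz with h | h
        · exact absurd h hlc
        · exact h
      exact pencil_hyperbolic d α β s lam z hz'
  · exact fun lam z s => det_identity d α β lam z s
end
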